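/- Let B be a Boolean algebra, D a bounded sublattice of B generating B as a Boolean algebra (so B is the Booleanization of D), and B' a Boolean subalgebra of B. Suppose there is a family of closure operators cᵢ on B (i ranging over a directed index set, each cᵢ = gᵢfᵢ for an adjunction into a meet-semilattice with Im(gᵢ) ⊆ Im(gⱼ) for i ≤ j and ⋃ᵢ Im(gᵢ) = D) such that B' is closed under each cᵢ. Then the Boolean subalgebra of B generated by D ∩ B' equals D⁻ ∩ B', where D⁻ is the Boolean subalgebra generated by D. In particular the left-to-right containment (D ∩ B')⁻ ⊆ D⁻ ∩ B' always holds. -/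

import Mathlib

/-- `T` is a Boolean subalgebra of the Boolean algebra `B`. -/
def IsBoolSubalg {B : Type*} [BooleanAlgebra B] (T : Set B) : Prop :=
  ⊥ ∈ T ∧ ⊤ ∈ T ∧ (∀ a ∈ T, aᶜ ∈ T) ∧
    (∀ a ∈ T, ∀ b ∈ T, a ⊓ b ∈ T) ∧ (∀ a ∈ T, ∀ b ∈ T, a ⊔ b ∈ T)

/-- The Boolean subalgebra of `B` generated by a subset `S`. -/
def boolGen {B : Type*} [BooleanAlgebra B] (S : Set B) : Set B :=
  ⋂₀ {T : Set B | IsBoolSubalg T ∧ S ⊆ T}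

lemma IsBoolSubalg.sdiff_mem {B : Type*} [BooleanAlgebra B] {T : Set B}
    (hT : IsBoolSubalg T) {a b : B} (ha : a ∈ T) (hb : b ∈ T) : a \ b ∈ T := by
  rw [sdiff_eq]
  exact hT.2.2.2.1 a ha bᶜ (hT.2.2.1 b hb)

namespace Stmt19Aux

open scoped Classical

noncomputable section

variable {B : Type*} [BooleanAlgebra B]

/-! ### Basic facts about `boolGen` -/

lemma isBoolSubalg_boolGen (S : Set B) : IsBoolSubalg (boolGen S) := by
  refine ⟨?_, ?_, ?_, ?_, ?_⟩
  · exact fun _ hT => hT.1.1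
  · exact fun _ hT => hT.1.2.1
  · exact fun a ha T hT => hT.1.2.2.1 a (ha T hT)
  · exact fun a ha b hb T hT => hT.1.2.2.2.1 a (ha T hT) b (hb T hT)
  · exact fun a ha b hb T hT => hT.1.2.2.2.2 a (ha T hT) b (hb T hT)

lemma subset_boolGen (S : Set B) : S ⊆ boolGen S :=
  fun _ hx T hT => hT.2 hx

lemma boolGen_le {S T : Set B} (hT : IsBoolSubalg T) (h : S ⊆ T) : boolGen S ⊆ T :=
  fun _ hx => hx T ⟨hT, h⟩

lemma boolGen_mono {S T : Set B} (h : S ⊆ T) : boolGen S ⊆ boolGen T :=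
  boolGen_le (isBoolSubalg_boolGen T) (h.trans (subset_boolGen T))

/-! ### Difference chains -/

def chainVal : List B → B
  | [] => ⊥
  | a :: l => a \ chainVal l

lemma chainVal_map_inf (u : B) : ∀ l : List B, chainVal (l.map (u ⊓ ·)) = u ⊓ chainVal l
  | [] => by simp [chainVal]
  | a :: l => by
    simp only [List.map_cons, chainVal, chainVal_map_inf u l]
    rw [inf_sdiff_distrib_left]

/-! ### Cells over a finite set of generators -/

def cell (L φ : Finset B) : B := φ.inf id ⊓ (L \ φ).inf fun t => tᶜ

lemma cell_le_of_mem {L φ : Finset B} {t : B} (ht : t ∈ φ) : cell L φ ≤ t :=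
  inf_le_left.trans (Finset.inf_le ht)

lemma cell_le_compl {L φ : Finset B} {t : B} (ht : t ∈ L) (ht' : t ∉ φ) : cell L φ ≤ tᶜ :=
  inf_le_right.trans (Finset.inf_le (Finset.mem_sdiff.mpr ⟨ht, ht'⟩))

lemma cell_inf_cell_of_ne {L φ ψ : Finset B} (hφ : φ ⊆ L) (hψ : ψ ⊆ L) (hne : φ ≠ ψ) :
    cell L φ ⊓ cell L ψ = ⊥ := by
  obtain ⟨t, ht⟩ : ∃ t, (t ∈ φ ∧ t ∉ ψ) ∨ (t ∈ ψ ∧ t ∉ φ) := by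
    by_contra hc
    push_neg at hc
    apply hne
    ext t
    have := hc t
    tauto
  rcases ht with ⟨h1, h2⟩ | ⟨h1, h2⟩
  · have h := inf_le_inf (cell_le_of_mem (L := L) h1) (cell_le_compl (hφ h1) h2)
    exact le_bot_iff.mp (h.trans (by simp))
  · have h := inf_le_inf (cell_le_compl (hψ h1) h2) (cell_le_of_mem (L := L) h1)
    exact le_bot_iff.mp (h.trans (by simp))

lemma sup_cell_top (L : Finset B) : L.powerset.sup (cell L) = ⊤ := by
  induction L using Finset.induction_on with
  | empty => simp [cell]
  | @insert a L ha IH =>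
    rw [Finset.powerset_insert, Finset.sup_union, Finset.sup_image]
    have h1 : ∀ φ ∈ L.powerset, cell (insert a L) φ = aᶜ ⊓ cell L φ := by
      intro φ hφ
      have haφ : a ∉ φ := fun h => ha (Finset.mem_powerset.mp hφ h)
      rw [cell, Finset.insert_sdiff_of_notMem _ haφ, Finset.inf_insert, cell]
      simp only [inf_left_comm, inf_comm, inf_assoc]
    have h2 : ∀ φ ∈ L.powerset, (cell (insert a L) ∘ insert a) φ = a ⊓ cell L φ := by
      intro φ hφ
      have hsd : insert a L \ insert a φ = L \ φ := by
        ext x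
        simp only [Finset.mem_sdiff, Finset.mem_insert, not_or]
        constructor
        · rintro ⟨hx1 | hx1, hx2, hx3⟩
          · exact absurd hx1 hx2
          · exact ⟨hx1, hx3⟩
        · rintro ⟨hx1, hx2⟩
          exact ⟨Or.inr hx1, fun h => ha (h ▸ hx1), hx2⟩
      simp only [Function.comp, cell, hsd, Finset.inf_insert, id]
      simp only [inf_left_comm, inf_comm, inf_assoc]
    rw [Finset.sup_congr rfl h1, Finset.sup_congr rfl h2]
    rw [← Finset.sup_inf_distrib_left, ← Finset.sup_inf_distrib_left, IH]
    simp

def cellSet (L : Finset B) : Set B :=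
  {b | ∃ Φ : Finset (Finset B), Φ ⊆ L.powerset ∧ b = Φ.sup (cell L)}

lemma mem_cellSet_of_mem {L : Finset B} {t : B} (ht : t ∈ L) : t ∈ cellSet L := by
  refine ⟨L.powerset.filter fun φ => t ∈ φ, Finset.filter_subset _ _, ?_⟩
  apply le_antisymm
  · conv_lhs => rw [← inf_top_eq t, ← sup_cell_top L]
    rw [Finset.sup_inf_distrib_left]
    apply Finset.sup_le
    intro φ hφ
    by_cases htφ : t ∈ φ
    · exact inf_le_right.trans (Finset.le_sup (Finset.mem_filter.mpr ⟨hφ, htφ⟩))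
    · have h : t ⊓ cell L φ ≤ t ⊓ tᶜ := inf_le_inf le_rfl (cell_le_compl ht htφ)
      exact (h.trans (by simp)).trans bot_le
  · apply Finset.sup_le
    intro φ hφ
    exact cell_le_of_mem (Finset.mem_filter.mp hφ).2

lemma isBoolSubalg_cellSet (L : Finset B) : IsBoolSubalg (cellSet L) := by
  have hinf : ∀ a ∈ cellSet L, ∀ b ∈ cellSet L, a ⊓ b ∈ cellSet L := by
    rintro a ⟨Φ, hΦ, rfl⟩ b ⟨Ψ, hΨ, rfl⟩
    refine ⟨Φ ∩ Ψ, (Finset.inter_subset_left).trans hΦ, le_antisymm ?_ ?_⟩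
    · rw [Finset.sup_inf_sup]
      apply Finset.sup_le
      rintro ⟨φ, ψ⟩ hp
      rw [Finset.mem_product] at hp
      by_cases hpq : φ = ψ
      · subst hpq
        rw [inf_idem]
        exact Finset.le_sup (Finset.mem_inter.mpr ⟨hp.1, hp.2⟩)
      · rw [cell_inf_cell_of_ne (Finset.mem_powerset.mp (hΦ hp.1))
          (Finset.mem_powerset.mp (hΨ hp.2)) hpq]
        exact bot_le
    · apply Finset.sup_le
      intro φ hφ
      rw [Finset.mem_inter] at hφ
      exact le_inf (Finset.le_sup hφ.1) (Finset.le_sup hφ.2)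
  have hcompl : ∀ a ∈ cellSet L, aᶜ ∈ cellSet L := by
    rintro a ⟨Φ, hΦ, rfl⟩
    refine ⟨L.powerset \ Φ, Finset.sdiff_subset, ?_⟩
    refine compl_unique ?_ ?_
    · rw [Finset.sup_inf_sup]
      apply le_bot_iff.mp
      apply Finset.sup_le
      rintro ⟨φ, ψ⟩ hp
      rw [Finset.mem_product] at hp
      have h1 := hp.1
      have h2 := Finset.mem_sdiff.mp hp.2
      have hne : φ ≠ ψ := fun h => h2.2 (h ▸ h1)
      rw [cell_inf_cell_of_ne (Finset.mem_powerset.mp (hΦ h1))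
        (Finset.mem_powerset.mp h2.1) hne]
    · rw [← Finset.sup_union, Finset.union_sdiff_of_subset hΦ, sup_cell_top]
  refine ⟨⟨∅, by simp, by simp⟩, ⟨L.powerset, le_refl _, (sup_cell_top L).symm⟩,
    hcompl, hinf, ?_⟩
  rintro a ⟨Φ, hΦ, rfl⟩ b ⟨Ψ, hΨ, rfl⟩
  exact ⟨Φ ∪ Ψ, Finset.union_subset hΦ hΨ, (Finset.sup_union).symm⟩

/-! ### The least-cover machinery and chain extraction -/

def ell (φ : Finset B) : B := φ.inf id

lemma cell_le_ell (L φ : Finset B) : cell L φ ≤ ell φ := inf_le_left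

lemma mem_of_cell_le {L φ : Finset B} {t : B} (hne : cell L φ ≠ ⊥) (ht : t ∈ L)
    (h : cell L φ ≤ t) : t ∈ φ := by
  by_contra htφ
  apply hne
  have h2 : cell L φ ≤ t ⊓ tᶜ := le_inf h (cell_le_compl ht htφ)
  exact le_bot_iff.mp (h2.trans (by simp))

lemma ell_le_of_cell_le {L φ : Finset B} {t : B} (hne : cell L φ ≠ ⊥) (ht : t ∈ L)
    (h : cell L φ ≤ t) : ell φ ≤ t :=
  Finset.inf_le (mem_of_cell_le hne ht h)

lemma ell_inj {L φ ψ : Finset B} (hφ : φ ⊆ L) (hψ : ψ ⊆ L)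
    (hφne : cell L φ ≠ ⊥) (hψne : cell L ψ ≠ ⊥) (h : ell φ = ell ψ) : φ = ψ := by
  ext t
  constructor
  · intro htφ
    exact mem_of_cell_le hψne (hφ htφ)
      ((cell_le_ell L ψ).trans (h ▸ Finset.inf_le htφ))
  · intro htψ
    exact mem_of_cell_le hφne (hψ htψ)
      ((cell_le_ell L φ).trans (h.symm ▸ Finset.inf_le htψ))

lemma cell_le_sup_elim {L φ : Finset B} {Φ : Finset (Finset B)} {F : Finset B → B}
    (hne : cell L φ ≠ ⊥) (hF : ∀ ψ ∈ Φ, F ψ ∈ L) (h : cell L φ ≤ Φ.sup F) :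
    ∃ ψ ∈ Φ, cell L φ ≤ F ψ := by
  have heq : cell L φ = Φ.sup fun ψ => cell L φ ⊓ F ψ := by
    rw [← Finset.sup_inf_distrib_left]
    exact (inf_eq_left.mpr h).symm
  by_contra hc
  push_neg at hc
  apply hne
  rw [heq, Finset.sup_eq_bot_iff]
  intro ψ hψ
  by_cases hmem : F ψ ∈ φ
  · exact absurd (cell_le_of_mem hmem) (hc ψ hψ)
  · have h2 : cell L φ ⊓ F ψ ≤ (F ψ)ᶜ ⊓ F ψ :=
      inf_le_inf (cell_le_compl (hF ψ hψ) hmem) le_rfl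
    exact le_bot_iff.mp (h2.trans (by simp))

def cellsOf (L : Finset B) (b : B) : Finset (Finset B) :=
  L.powerset.filter fun φ => cell L φ ≠ ⊥ ∧ cell L φ ≤ b

def hgt (L : Finset B) (x : B) : ℕ := (L.filter fun t => x ≤ t).card

def mea (L : Finset B) (b : B) : ℕ :=
  (cellsOf L b).sup fun φ => L.card + 1 - hgt L (ell φ)

lemma sup_cellsOf {L : Finset B} {b : B} (hb : b ∈ cellSet L) :
    b = (cellsOf L b).sup (cell L) := by
  obtain ⟨Φ, hΦ, rfl⟩ := hb
  apply le_antisymm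
  · apply Finset.sup_le
    intro φ hφ
    by_cases hne : cell L φ = ⊥
    · simp [hne]
    · exact Finset.le_sup (Finset.mem_filter.mpr ⟨hΦ hφ, hne, Finset.le_sup hφ⟩)
  · apply Finset.sup_le
    intro φ hφ
    exact (Finset.mem_filter.mp hφ).2.2

lemma inf_mem_of {p : B → Prop} (htop : p ⊤)
    (hinf : ∀ a, p a → ∀ b, p b → p (a ⊓ b)) {φ : Finset B} (hφ : ∀ t ∈ φ, p t) :
    p (φ.inf id) :=
  Finset.inf_induction htop hinf hφ

lemma sup_mem_of {p : B → Prop} (hbot : p ⊥)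
    (hsup : ∀ a, p a → ∀ b, p b → p (a ⊔ b)) {ι : Type*} {Φ : Finset ι} {F : ι → B}
    (hF : ∀ ψ ∈ Φ, p (F ψ)) : p (Φ.sup F) :=
  Finset.sup_induction hbot hsup hF

/-- Every element of the Boolean subalgebra generated by a finite bounded
sublattice `L` is the value of a difference chain with entries in `L`. -/
lemma exists_chain (L : Finset B) (hbot : ⊥ ∈ L) (htop : ⊤ ∈ L)
    (hinf : ∀ a ∈ L, ∀ b ∈ L, a ⊓ b ∈ L) (hsup : ∀ a ∈ L, ∀ b ∈ L, a ⊔ b ∈ L)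
    {b : B} (hb : b ∈ boolGen (↑L : Set B)) :
    ∃ l : List B, (∀ x ∈ l, x ∈ L) ∧ b = chainVal l := by
  have hbcs : b ∈ cellSet L :=
    boolGen_le (isBoolSubalg_cellSet L) (fun t ht => mem_cellSet_of_mem ht) hb
  clear hb
  have hell_mem : ∀ φ ∈ (L.powerset : Finset (Finset B)), ell φ ∈ L := fun φ hφ =>
    inf_mem_of htop (fun a ha b hb => hinf a ha b hb)
      (fun t ht => Finset.mem_powerset.mp hφ ht)
  have hmea_pos : ∀ c : B, c ∈ cellSet L → c ≠ ⊥ → 1 ≤ mea L c := by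
    intro c hc hcne
    have hsup' := sup_cellsOf hc
    have hne : (cellsOf L c).Nonempty := by
      rcases Finset.eq_empty_or_nonempty (cellsOf L c) with h | h
      · rw [h] at hsup'; simp at hsup'; exact absurd hsup' hcne
      · exact h
    obtain ⟨φ, hφ⟩ := hne
    have h1 : hgt L (ell φ) ≤ L.card := Finset.card_filter_le _ _
    have h2 : L.card + 1 - hgt L (ell φ) ≤ mea L c :=
      Finset.le_sup (f := fun φ => L.card + 1 - hgt L (ell φ)) hφ
    omega
  suffices h : ∀ (n : ℕ) (c : B), c ∈ cellSet L → mea L c ≤ n →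
      ∃ l : List B, (∀ x ∈ l, x ∈ L) ∧ c = chainVal l by
    exact h (mea L b) b hbcs le_rfl
  intro n
  induction n with
  | zero =>
    intro c hc hn
    by_cases hcne : c = ⊥
    · exact ⟨[], by simp, by simp [hcne, chainVal]⟩
    · exact absurd hn (by have := hmea_pos c hc hcne; omega)
  | succ n IH =>
    intro c hc hn
    by_cases hcne : c = ⊥
    · exact ⟨[], by simp, by simp [hcne, chainVal]⟩
    set w : B := (cellsOf L c).sup ell with hw
    have hwL : w ∈ L := sup_mem_of hbot (fun a ha b hb => hsup a ha b hb)
      (fun φ hφ => hell_mem φ (Finset.mem_filter.mp hφ).1)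
    have hcw : c ≤ w := by
      conv_lhs => rw [sup_cellsOf hc]
      exact Finset.sup_mono_fun fun φ _ => cell_le_ell L φ
    have hc' : w \ c ∈ cellSet L := by
      have halg := isBoolSubalg_cellSet L
      exact halg.sdiff_mem (mem_cellSet_of_mem hwL) hc
    -- the measure decreases
    have hkey : ∀ φ' ∈ cellsOf L (w \ c),
        L.card + 1 - hgt L (ell φ') + 1 ≤ mea L c := by
      intro φ' hφ'
      have hφ'p := Finset.mem_filter.mp hφ'
      have hφ'ne : cell L φ' ≠ ⊥ := hφ'p.2.1
      have hφ'le : cell L φ' ≤ w := hφ'p.2.2.trans sdiff_le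
      obtain ⟨φ, hφmem, hφle⟩ := cell_le_sup_elim hφ'ne
        (fun ψ hψ => hell_mem ψ (Finset.mem_filter.mp hψ).1) hφ'le
      have hφp := Finset.mem_filter.mp hφmem
      have hells : ell φ' ≤ ell φ :=
        ell_le_of_cell_le hφ'ne (hell_mem φ hφp.1) hφle
      have hneq : φ' ≠ φ := by
        intro h
        apply hφ'ne
        have h1 : cell L φ' ≤ c := h ▸ hφp.2.2
        have h2 : cell L φ' ≤ cᶜ := hφ'p.2.2.trans (by rw [sdiff_eq]; exact inf_le_right)
        exact le_bot_iff.mp ((le_inf h1 h2).trans (by simp))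
      have hellne : ell φ' ≠ ell φ := fun h =>
        hneq (ell_inj (Finset.mem_powerset.mp hφ'p.1) (Finset.mem_powerset.mp hφp.1)
          hφ'ne hφp.2.1 h)
      have hsub : (L.filter fun t => ell φ ≤ t) ⊆ (L.filter fun t => ell φ' ≤ t) := by
        intro t ht
        have h := Finset.mem_filter.mp ht
        exact Finset.mem_filter.mpr ⟨h.1, hells.trans h.2⟩
      have hmem1 : ell φ' ∈ (L.filter fun t => ell φ' ≤ t) :=
        Finset.mem_filter.mpr ⟨hell_mem φ' hφ'p.1, le_rfl⟩
      have hmem2 : ell φ' ∉ (L.filter fun t => ell φ ≤ t) := by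
        intro hcon
        exact absurd (le_antisymm hells (Finset.mem_filter.mp hcon).2).symm hellne.symm
      have hhgt : hgt L (ell φ) < hgt L (ell φ') :=
        Finset.card_lt_card ((Finset.ssubset_iff_of_subset hsub).mpr ⟨ell φ', hmem1, hmem2⟩)
      have h1 : hgt L (ell φ) ≤ L.card := Finset.card_filter_le _ _
      have h2 : L.card + 1 - hgt L (ell φ) ≤ mea L c :=
        Finset.le_sup (f := fun φ => L.card + 1 - hgt L (ell φ)) hφmem
      omega
    have hmea' : mea L (w \ c) ≤ n := by
      apply Finset.sup_le
      intro φ' hφ'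
      have h := hkey φ' hφ'
      omega
    obtain ⟨l', hl'mem, hl'val⟩ := IH (w \ c) hc' hmea'
    refine ⟨w :: l', ?_, ?_⟩
    · intro x hx
      rcases List.mem_cons.mp hx with h | h
      · exact h ▸ hwL
      · exact hl'mem x h
    · show c = w \ chainVal l'
      rw [← hl'val, sdiff_sdiff_right_self, inf_eq_right.mpr hcw]

/-! ### Finite lattice closure inside `D` -/

lemma exists_lattice_closure {D : Set B} (hbot : ⊥ ∈ D) (htop : ⊤ ∈ D)
    (hinf : ∀ a ∈ D, ∀ b ∈ D, a ⊓ b ∈ D) (hsup : ∀ a ∈ D, ∀ b ∈ D, a ⊔ b ∈ D)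
    (S : Finset B) (hS : ↑S ⊆ D) :
    ∃ L : Finset B, ↑L ⊆ D ∧ S ⊆ L ∧ ⊥ ∈ L ∧ ⊤ ∈ L ∧
      (∀ a ∈ L, ∀ b ∈ L, a ⊓ b ∈ L) ∧ (∀ a ∈ L, ∀ b ∈ L, a ⊔ b ∈ L) := by
  set M : Finset B := S.powerset.image fun σ => σ.inf id with hM
  have hMD : ∀ m ∈ M, m ∈ D := by
    intro m hm
    obtain ⟨σ, hσ, rfl⟩ := Finset.mem_image.mp hm
    exact inf_mem_of htop (fun a ha b hb => hinf a ha b hb)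
      (fun t ht => hS (Finset.mem_powerset.mp hσ ht))
  have hMinf : ∀ m ∈ M, ∀ m' ∈ M, m ⊓ m' ∈ M := by
    intro m hm m' hm'
    obtain ⟨σ, hσ, rfl⟩ := Finset.mem_image.mp hm
    obtain ⟨σ', hσ', rfl⟩ := Finset.mem_image.mp hm'
    refine Finset.mem_image.mpr ⟨σ ∪ σ', ?_, ?_⟩
    · exact Finset.mem_powerset.mpr (Finset.union_subset
        (Finset.mem_powerset.mp hσ) (Finset.mem_powerset.mp hσ'))
    · rw [Finset.inf_union]
  have hTopM : ⊤ ∈ M :=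
    Finset.mem_image.mpr ⟨∅, Finset.empty_mem_powerset S, by simp⟩
  refine ⟨M.powerset.image fun T => T.sup id, ?_, ?_, ?_, ?_, ?_, ?_⟩
  · intro x hx
    obtain ⟨T, hT, rfl⟩ := Finset.mem_image.mp (Finset.mem_coe.mp hx)
    exact sup_mem_of hbot (fun a ha b hb => hsup a ha b hb)
      (fun t ht => hMD t (Finset.mem_powerset.mp hT ht))
  · intro s hs
    have hsM : s ∈ M := Finset.mem_image.mpr
      ⟨{s}, Finset.mem_powerset.mpr (Finset.singleton_subset_iff.mpr hs), Finset.inf_singleton⟩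
    exact Finset.mem_image.mpr
      ⟨{s}, Finset.mem_powerset.mpr (Finset.singleton_subset_iff.mpr hsM), Finset.sup_singleton⟩
  · exact Finset.mem_image.mpr ⟨∅, Finset.empty_mem_powerset M, by simp⟩
  · exact Finset.mem_image.mpr
      ⟨{⊤}, Finset.mem_powerset.mpr (Finset.singleton_subset_iff.mpr hTopM),
        Finset.sup_singleton⟩
  · intro x hx y hy
    obtain ⟨T, hT, rfl⟩ := Finset.mem_image.mp hx
    obtain ⟨T', hT', rfl⟩ := Finset.mem_image.mp hy
    refine Finset.mem_image.mpr ⟨(T ×ˢ T').image fun p => p.1 ⊓ p.2, ?_, ?_⟩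
    · apply Finset.mem_powerset.mpr
      intro m hm
      obtain ⟨⟨m1, m2⟩, hp, rfl⟩ := Finset.mem_image.mp hm
      rw [Finset.mem_product] at hp
      exact hMinf m1 (Finset.mem_powerset.mp hT hp.1) m2 (Finset.mem_powerset.mp hT' hp.2)
    · rw [Finset.sup_image, Finset.sup_inf_sup]
      rfl
  · intro x hx y hy
    obtain ⟨T, hT, rfl⟩ := Finset.mem_image.mp hx
    obtain ⟨T', hT', rfl⟩ := Finset.mem_image.mp hy
    refine Finset.mem_image.mpr ⟨T ∪ T', ?_, ?_⟩
    · exact Finset.mem_powerset.mpr (Finset.union_subset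
        (Finset.mem_powerset.mp hT) (Finset.mem_powerset.mp hT'))
    · rw [Finset.sup_union]

end

end Stmt19Aux

theorem stmt19 {B I : Type*} [BooleanAlgebra B] [Preorder I] [IsDirected I (· ≤ ·)]
    (S : I → Type*) [∀ i, SemilatticeInf (S i)]
    (f : ∀ i, B → S i) (g : ∀ i, S i → B)
    -- a directed family of adjunctions
    (adj : ∀ (i : I) (b : B) (s : S i), f i b ≤ s ↔ b ≤ g i s)
    (him : ∀ i j : I, i ≤ j → Set.range (g i) ⊆ Set.range (g j))
    -- `D = ⋃ᵢ Im(gᵢ)` is a bounded sublattice of `B`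
    (D : Set B) (hD : D = ⋃ i, Set.range (g i))
    (hbot : ⊥ ∈ D) (htop : ⊤ ∈ D)
    (hinf : ∀ a ∈ D, ∀ b ∈ D, a ⊓ b ∈ D) (hsup : ∀ a ∈ D, ∀ b ∈ D, a ⊔ b ∈ D)
    -- `D` generates `B` as a Boolean algebra, i.e. `B` is the Booleanization of `D`
    (hgen : boolGen D = Set.univ)
    -- `B'` is a Boolean subalgebra of `B` closed under each closure operator `cᵢ = gᵢ ∘ fᵢ`
    (B' : Set B) (hB' : IsBoolSubalg B')
    (hclosed : ∀ (i : I), ∀ b ∈ B', g i (f i b) ∈ B') :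
    boolGen (D ∩ B') = boolGen D ∩ B' ∧
    -- in particular, the left-to-right containment (which always holds)
    boolGen (D ∩ B') ⊆ boolGen D ∩ B' := by
  classical
  have hA := Stmt19Aux.isBoolSubalg_boolGen (D ∩ B')
  have hforward : boolGen (D ∩ B') ⊆ boolGen D ∩ B' := fun x hx =>
    ⟨Stmt19Aux.boolGen_mono Set.inter_subset_left hx,
     Stmt19Aux.boolGen_le hB' Set.inter_subset_right hx⟩
  refine ⟨Set.Subset.antisymm hforward ?_, hforward⟩
  -- adjunction facts
  have gmono : ∀ (i : I) (s t : S i), s ≤ t → g i s ≤ g i t := by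
    intro i s t h
    exact (adj i (g i s) t).mp (le_trans ((adj i (g i s) s).mpr le_rfl) h)
  have unit : ∀ (i : I) (b : B), b ≤ g i (f i b) := fun i b => (adj i b (f i b)).mp le_rfl
  have lec : ∀ (i : I) (b : B) (s : S i), b ≤ g i s → g i (f i b) ≤ g i s :=
    fun i b s h => gmono i _ _ ((adj i b s).mpr h)
  have grange_inf : ∀ (i : I) (x y : B), x ∈ Set.range (g i) → y ∈ Set.range (g i) →
      x ⊓ y ∈ Set.range (g i) := by
    rintro i x y ⟨s, rfl⟩ ⟨t, rfl⟩
    refine ⟨s ⊓ t, le_antisymm ?_ ?_⟩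
    · exact le_inf (gmono i _ _ inf_le_left) (gmono i _ _ inf_le_right)
    · exact (adj i _ _).mp (le_inf ((adj i _ s).mpr inf_le_left) ((adj i _ t).mpr inf_le_right))
  -- directedness: any finite subset of `D` lies in a single `Im gᵢ`
  have hbotU : (⊥ : B) ∈ ⋃ i, Set.range (g i) := hD ▸ hbot
  obtain ⟨i₀, -⟩ := Set.mem_iUnion.mp hbotU
  have hdir : ∀ T : Finset B, ↑T ⊆ D → ∃ i, (↑T : Set B) ⊆ Set.range (g i) := by
    intro T
    induction T using Finset.induction_on with
    | empty => intro _; exact ⟨i₀, by simp⟩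
    | @insert a T ha IH =>
      intro hins
      rw [Finset.coe_insert, Set.insert_subset_iff] at hins
      obtain ⟨i₁, hi₁⟩ := IH hins.2
      obtain ⟨i₂, hi₂⟩ := Set.mem_iUnion.mp (hD ▸ hins.1 : a ∈ ⋃ i, Set.range (g i))
      obtain ⟨k, hk₁, hk₂⟩ := directed_of (· ≤ ·) i₁ i₂
      refine ⟨k, ?_⟩
      rw [Finset.coe_insert, Set.insert_subset_iff]
      exact ⟨him i₂ k hk₂ hi₂, fun x hx => him i₁ k hk₁ (hi₁ hx)⟩
  -- the key chain induction
  have key : ∀ (n : ℕ) (l : List B) (i : I), l.length ≤ n →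
      (∀ x ∈ l, x ∈ Set.range (g i)) → ∀ b ∈ B', b = Stmt19Aux.chainVal l →
      b ∈ boolGen (D ∩ B') := by
    intro n
    induction n with
    | zero =>
      intro l i hl _ b _ hval
      have hnil : l = [] := List.length_eq_zero_iff.mp (Nat.le_zero.mp hl)
      subst hnil
      rw [hval]
      exact hA.1
    | succ n IH =>
      intro l i hl hent b hbB' hval
      cases l with
      | nil =>
        rw [hval]
        exact hA.1
      | cons a s =>
        have hba : b ≤ a := by rw [hval]; exact sdiff_le
        obtain ⟨s₀, hs₀⟩ := hent a (List.mem_cons_self (a := a) (l := s))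
        set w : B := g i (f i b) with hwdef
        have hwB' : w ∈ B' := hclosed i b hbB'
        have hwD : w ∈ D := by
          rw [hD]; exact Set.mem_iUnion.mpr ⟨i, ⟨f i b, rfl⟩⟩
        have hbw : b ≤ w := unit i b
        have hwa : w ≤ a := by
          rw [← hs₀] at hba ⊢
          exact lec i b s₀ hba
        have hwA : w ∈ boolGen (D ∩ B') := Stmt19Aux.subset_boolGen _ ⟨hwD, hwB'⟩
        have hb'B' : w \ b ∈ B' := hB'.sdiff_mem hwB' hbB'
        have hcalc : w \ b = Stmt19Aux.chainVal (s.map (w ⊓ ·)) := by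
          rw [Stmt19Aux.chainVal_map_inf, hval]
          show w \ (a \ Stmt19Aux.chainVal s) = _
          rw [sdiff_sdiff_right', sdiff_eq_bot_iff.mpr hwa, bot_sup_eq]
        have hent' : ∀ x ∈ s.map (w ⊓ ·), x ∈ Set.range (g i) := by
          intro x hx
          obtain ⟨y, hy, rfl⟩ := List.mem_map.mp hx
          exact grange_inf i w y ⟨f i b, hwdef.symm⟩ (hent y (List.mem_cons_of_mem a hy))
        have hsl : (s.map (w ⊓ ·)).length ≤ n := by
          rw [List.length_map]
          have := hl
          simp only [List.length_cons] at this
          omega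
        have hb'A : w \ b ∈ boolGen (D ∩ B') :=
          IH (s.map (w ⊓ ·)) i hsl hent' (w \ b) hb'B' hcalc
        have hfin : b = w \ (w \ b) := by
          rw [sdiff_sdiff_right_self, inf_eq_right.mpr hbw]
        rw [hfin]
        exact hA.sdiff_mem hwA hb'A
  -- main argument
  rintro x ⟨-, hxB'⟩
  have hxgen : x ∈ boolGen D := by rw [hgen]; trivial
  have hEalg : IsBoolSubalg {b : B | ∃ T : Finset B, ↑T ⊆ D ∧ b ∈ boolGen (↑T : Set B)} := by
    refine ⟨⟨∅, by simp, (Stmt19Aux.isBoolSubalg_boolGen _).1⟩,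
      ⟨∅, by simp, (Stmt19Aux.isBoolSubalg_boolGen _).2.1⟩, ?_, ?_, ?_⟩
    · rintro a ⟨T, hT, ha⟩
      exact ⟨T, hT, (Stmt19Aux.isBoolSubalg_boolGen _).2.2.1 a ha⟩
    · rintro a ⟨T₁, hT₁, ha⟩ b ⟨T₂, hT₂, hb⟩
      refine ⟨T₁ ∪ T₂, ?_, (Stmt19Aux.isBoolSubalg_boolGen _).2.2.2.1 a ?_ b ?_⟩
      · rw [Finset.coe_union]; exact Set.union_subset hT₁ hT₂
      · exact Stmt19Aux.boolGen_mono (Finset.coe_subset.mpr Finset.subset_union_left) ha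
      · exact Stmt19Aux.boolGen_mono (Finset.coe_subset.mpr Finset.subset_union_right) hb
    · rintro a ⟨T₁, hT₁, ha⟩ b ⟨T₂, hT₂, hb⟩
      refine ⟨T₁ ∪ T₂, ?_, (Stmt19Aux.isBoolSubalg_boolGen _).2.2.2.2 a ?_ b ?_⟩
      · rw [Finset.coe_union]; exact Set.union_subset hT₁ hT₂
      · exact Stmt19Aux.boolGen_mono (Finset.coe_subset.mpr Finset.subset_union_left) ha
      · exact Stmt19Aux.boolGen_mono (Finset.coe_subset.mpr Finset.subset_union_right) hb
  have hDE : D ⊆ {b : B | ∃ T : Finset B, ↑T ⊆ D ∧ b ∈ boolGen (↑T : Set B)} := by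
    intro d hd
    exact ⟨{d}, by simpa using hd, Stmt19Aux.subset_boolGen _ (by simp)⟩
  obtain ⟨T, hTD, hxT⟩ := Stmt19Aux.boolGen_le hEalg hDE hxgen
  obtain ⟨L, hLD, hTL, hLbot, hLtop, hLinf, hLsup⟩ :=
    Stmt19Aux.exists_lattice_closure hbot htop hinf hsup T hTD
  have hxL : x ∈ boolGen (↑L : Set B) :=
    Stmt19Aux.boolGen_mono (Finset.coe_subset.mpr hTL) hxT
  obtain ⟨l, hlmem, hlval⟩ := Stmt19Aux.exists_chain L hLbot hLtop hLinf hLsup hxL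
  obtain ⟨i, hiL⟩ := hdir L hLD
  exact key l.length l i le_rfl (fun y hy => hiL (Finset.mem_coe.mpr (hlmem y hy))) x hxB' hlval
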